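/- arXiv:1907.03753 — 11 statements merged into one kernel-verified Lean document; each statement's English description precedes it below -/
import Mathlib

section
/- If $p_1,\ldots,p_n$ are positive real numbers ($n\geq 1$) and $C_1,\ldots,C_n$ are nonzero idempotent elements (events) of a unital commutative associative real algebra $\mathcal{T}$, then $\sum_{i=1}^n p_i C_i \neq 0$. -/
theorem pos_comb_nonzero_events {T : Type*} [CommRing T] [Algebra ℝ T]
    (n : ℕ) (hn : 1 ≤ n) (p : Fin n → ℝ) (hp : ∀ i, 0 < p i)
    (C : Fin n → T) (hidem : ∀ i, C i * C i = C i) (hne : ∀ i, C i ≠ 0) :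
    (∑ i, p i • C i) ≠ 0 := by
  classical
  set i0 : Fin n := ⟨0, hn⟩ with hi0
  have key : ∀ s : Finset (Fin n), ∃ e : T, e ≠ 0 ∧ e * C i0 = e ∧
      ∀ i ∈ s, e * C i = e ∨ e * C i = 0 := by
    intro s
    induction s using Finset.induction_on with
    | empty => exact ⟨C i0, hne i0, hidem i0, by simp⟩
    | @insert j s hj ih =>
      obtain ⟨e, he0, hei0, hes⟩ := ih
      by_cases h : e * C j = 0
      · refine ⟨e, he0, hei0, ?_⟩
        intro i hi
        rcases Finset.mem_insert.mp hi with rfl | hi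
        · exact Or.inr h
        · exact hes i hi
      · refine ⟨e * C j, h, ?_, ?_⟩
        · rw [mul_right_comm, hei0]
        · intro i hi
          rcases Finset.mem_insert.mp hi with rfl | hi
          · exact Or.inl (by rw [mul_assoc, hidem])
          · rcases hes i hi with h' | h'
            · exact Or.inl (by rw [mul_right_comm, h'])
            · exact Or.inr (by rw [mul_right_comm, h', zero_mul])
  obtain ⟨e, he0, hei0, hall⟩ := key Finset.univ
  intro hsum
  have h1 : e * (∑ i, p i • C i) = ∑ i, p i • (e * C i) := by
    rw [Finset.mul_sum]
    exact Finset.sum_congr rfl fun i _ => (mul_smul_comm _ _ _)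
  have h2 : ∑ i, p i • (e * C i) = (∑ i, if e * C i = e then p i else 0) • e := by
    rw [Finset.sum_smul]
    refine Finset.sum_congr rfl fun i _ => ?_
    rcases hall i (Finset.mem_univ i) with h | h
    · rw [if_pos h, h]
    · rw [if_neg (fun hc => he0 (hc.symm.trans h)), h, smul_zero, zero_smul]
  set c : ℝ := ∑ i, if e * C i = e then p i else 0 with hc
  have hcpos : 0 < c := by
    refine Finset.sum_pos' (fun i _ => ?_) ⟨i0, Finset.mem_univ i0, ?_⟩
    · split <;> [exact (hp i).le; exact le_refl 0]
    · rw [if_pos hei0]; exact hp i0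
  have hce : c • e = 0 := by rw [← h2, ← h1, hsum, mul_zero]
  have : e = 0 := by
    have := congrArg (fun x => c⁻¹ • x) hce
    simpa [smul_smul, inv_mul_cancel₀ hcpos.ne'] using this
  exact he0 this
end

section
/- Plausible property of plausible equivalence: if $p_1,\ldots,p_n$ are positive reals, $A_1,\ldots,A_n$ are events, $\sim$ is the equivalence part of a plausible preorder $\lesssim$, and $0 \sim \sum_{i=1}^n p_i A_i$, then $0 \sim A_i$ for every $i$. -/
/-- A plausible preorder on a unital associative commutative real algebra. -/
structure PlausiblePreorder (T : Type*) [CommRing T] [Algebra ℝ T] where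
  le : T → T → Prop
  plausible : ∀ A : T, A * A = A → le 0 A
  additive : ∀ X Y : T, le 0 X → le 0 Y → le 0 (X + Y)
  smul_nonneg : ∀ (q : ℝ) (X : T), 0 ≤ q → le 0 X → le 0 (q • X)
  extension : ∀ X Y : T, le X Y ↔ le 0 (Y - X)

variable {T : Type*} [CommRing T] [Algebra ℝ T]

/-- The strict part of a plausible preorder. -/
def PlausiblePreorder.lt (P : PlausiblePreorder T) (X Y : T) : Prop :=
  P.le X Y ∧ ¬ P.le Y X

/-- The equivalence part of a plausible preorder. -/
def PlausiblePreorder.equiv (P : PlausiblePreorder T) (X Y : T) : Prop :=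
  P.le X Y ∧ P.le Y X

theorem plausibleEquiv_plausible_property (P : PlausiblePreorder T)
    (n : ℕ) (p : Fin n → ℝ) (hp : ∀ i, 0 < p i)
    (A : Fin n → T) (hA : ∀ i, A i * A i = A i)
    (h : P.equiv 0 (∑ i, p i • A i)) :
    ∀ i, P.equiv 0 (A i) := by
  intro j
  have hAle : ∀ i, P.le 0 (A i) := fun i => P.plausible _ (hA i)
  have hzero : P.le 0 0 := P.plausible 0 (by ring)
  have hsum : ∀ (s : Finset (Fin n)), P.le 0 (∑ i ∈ s, p i • A i) := by
    intro s
    refine Finset.sum_induction _ (fun x => P.le 0 x) (fun a b ha hb => P.additive _ _ ha hb) hzero ?_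
    intro i _
    exact P.smul_nonneg _ _ (hp i).le (hAle i)
  have hneg : P.le 0 (-(∑ i, p i • A i)) := by
    have := h.2
    rw [P.extension] at this
    simpa using this
  have hrest : P.le 0 (∑ i ∈ Finset.univ.erase j, p i • A i) := hsum _
  have hkey : P.le 0 ((p j)⁻¹ • ((∑ i ∈ Finset.univ.erase j, p i • A i) + -(∑ i, p i • A i))) :=
    P.smul_nonneg _ _ (inv_nonneg.mpr (hp j).le) (P.additive _ _ hrest hneg)
  have heq : ((p j)⁻¹ • ((∑ i ∈ Finset.univ.erase j, p i • A i) + -(∑ i, p i • A i))) = -(A j) := by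
    rw [← Finset.sum_erase_add _ _ (Finset.mem_univ j)]
    rw [show (∑ i ∈ Finset.univ.erase j, p i • A i) + -((∑ i ∈ Finset.univ.erase j, p i • A i) + p j • A j) = -(p j • A j) by abel]
    rw [smul_neg, smul_smul, inv_mul_cancel₀ (hp j).ne', one_smul]
  rw [heq] at hkey
  refine ⟨by simpa using (P.extension 0 (A j)).mpr (by simpa using hAle j), ?_⟩
  rw [P.extension]
  simpa using hkey
end

section
/- Every relation $\sim$ on $\mathcal{T}$ satisfying the fundamental properties of a plausible equivalence (plausible property, reflexivity at 0, additivity, multiplicativity by all reals, and extension property) is the equivalence part of some plausible preorder; moreover, the relation defined by $0\lesssim X$ iff $X = U + \sum_{i=1}^n q_i A_i$ for some $U \sim 0$, $n\geq 0$, nonnegative reals $q_i$ and events $A_i$ (extended by $X\lesssim Y$ iff $0\lesssim Y-X$) is the smallest such plausible preorder. -/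
variable {T : Type*} [CommRing T] [Algebra ℝ T]

/-- The candidate "nonnegative" predicate generated by a plausible equivalence:
`0 ≲ X` iff `X = U + ∑ qᵢ • Aᵢ` for some `U ∼ 0`, nonnegative reals `qᵢ` and events `Aᵢ`. -/
def genNonneg (sim : T → T → Prop) (X : T) : Prop :=
  ∃ (U : T) (n : ℕ) (q : Fin n → ℝ) (A : Fin n → T),
    sim U 0 ∧ (∀ i, 0 ≤ q i) ∧ (∀ i, A i * A i = A i) ∧ X = U + ∑ i, q i • A i

theorem plausibleEquiv_sufficiency (sim : T → T → Prop)
    (hplaus : ∀ (n : ℕ) (p : Fin n → ℝ) (A : Fin n → T),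
      (∀ i, 0 < p i) → (∀ i, A i * A i = A i) →
      sim 0 (∑ i, p i • A i) → ∀ i, sim 0 (A i))
    (hrefl : sim 0 0)
    (hadd : ∀ X Y : T, sim 0 X → sim 0 Y → sim 0 (X + Y))
    (hsmul : ∀ (r : ℝ) (X : T), sim 0 X → sim 0 (r • X))
    (hext : ∀ X Y : T, sim X Y ↔ sim 0 (Y - X)) :
    ∃ P : PlausiblePreorder T,
      (P.le = fun X Y => genNonneg sim (Y - X)) ∧
      (∀ X Y : T, P.equiv X Y ↔ sim X Y) ∧
      (∀ Q : PlausiblePreorder T, (∀ X Y : T, Q.equiv X Y ↔ sim X Y) →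
        ∀ X Y : T, P.le X Y → Q.le X Y) := by
  classical
  -- basic facts about sim
  have hneg : ∀ X : T, sim 0 X → sim 0 (-X) := by
    intro X h
    have := hsmul (-1) X h
    simpa using this
  have hsim0 : ∀ U : T, sim U 0 ↔ sim 0 (-U) := by
    intro U; rw [hext U 0]; simp
  -- key lemma: nonneg combos with sim 0 have each term sim 0
  have key : ∀ (n : ℕ) (q : Fin n → ℝ) (A : Fin n → T),
      (∀ i, 0 ≤ q i) → (∀ i, A i * A i = A i) →
      sim 0 (∑ i, q i • A i) → ∀ i, sim 0 (q i • A i) := by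
    intro n q A hq hA hs i
    set p : Fin n → ℝ := fun i => if q i = 0 then 1 else q i with hp
    set B : Fin n → T := fun i => if q i = 0 then 0 else A i with hB
    have hpos : ∀ j, 0 < p j := by
      intro j; simp only [hp]
      split
      · norm_num
      · exact lt_of_le_of_ne (hq j) (Ne.symm ‹q j ≠ 0›)
    have hBid : ∀ j, B j * B j = B j := by
      intro j; simp only [hB]; split <;> simp [hA j]
    have hterm : ∀ j, p j • B j = q j • A j := by
      intro j; simp only [hp, hB]
      split
      · simp [‹q j = 0›]
      · rfl
    have hs' : sim 0 (∑ j, p j • B j) := by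
      rw [Finset.sum_congr rfl (fun j _ => hterm j)]; exact hs
    have hBi := hplaus n p B hpos hBid hs' i
    by_cases h0 : q i = 0
    · simpa [h0] using hrefl
    · have : B i = A i := by simp [hB, h0]
      rw [this] at hBi
      exact hsmul (q i) (A i) hBi
  have sumsim : ∀ (n : ℕ) (f : Fin n → T), (∀ i, sim 0 (f i)) → sim 0 (∑ i, f i) := by
    intro n f hf
    refine Finset.sum_induction f (fun x => sim 0 x) (fun a b ha hb => hadd a b ha hb) hrefl
      (fun i _ => hf i)
  -- genNonneg closure properties
  have gn_plaus : ∀ A : T, A * A = A → genNonneg sim A := by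
    intro A hA
    exact ⟨0, 1, fun _ => 1, fun _ => A, (hsim0 0).2 (by simpa using hrefl),
      fun _ => zero_le_one, fun _ => hA, by simp⟩
  have gn_add : ∀ X Y : T, genNonneg sim X → genNonneg sim Y → genNonneg sim (X + Y) := by
    rintro X Y ⟨U1, n1, q1, A1, hU1, hq1, hA1, hX⟩ ⟨U2, n2, q2, A2, hU2, hq2, hA2, hY⟩
    refine ⟨U1 + U2, n1 + n2, Fin.append q1 q2, Fin.append A1 A2, ?_, ?_, ?_, ?_⟩
    · rw [hsim0]
      have := hadd _ _ ((hsim0 U1).1 hU1) ((hsim0 U2).1 hU2)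
      simpa [neg_add, add_comm] using this
    · intro i
      rcases i with ⟨i, hi⟩
      by_cases h : i < n1
      · have : (⟨i, hi⟩ : Fin (n1 + n2)) = Fin.castAdd n2 ⟨i, h⟩ := rfl
        rw [this, Fin.append_left]; exact hq1 _
      · have hlt : i - n1 < n2 := by omega
        have : (⟨i, hi⟩ : Fin (n1 + n2)) = Fin.natAdd n1 ⟨i - n1, hlt⟩ := by
          simp [Fin.natAdd]; omega
        rw [this, Fin.append_right]; exact hq2 _
    · intro i
      rcases i with ⟨i, hi⟩
      by_cases h : i < n1
      · have : (⟨i, hi⟩ : Fin (n1 + n2)) = Fin.castAdd n2 ⟨i, h⟩ := rfl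
        rw [this, Fin.append_left]; exact hA1 _
      · have hlt : i - n1 < n2 := by omega
        have : (⟨i, hi⟩ : Fin (n1 + n2)) = Fin.natAdd n1 ⟨i - n1, hlt⟩ := by
          simp [Fin.natAdd]; omega
        rw [this, Fin.append_right]; exact hA2 _
    · rw [hX, hY, Fin.sum_univ_add]
      simp only [Fin.append_left, Fin.append_right]
      ring
  have gn_smul : ∀ (r : ℝ) (X : T), 0 ≤ r → genNonneg sim X → genNonneg sim (r • X) := by
    rintro r X hr ⟨U, n, q, A, hU, hq, hA, hX⟩
    refine ⟨r • U, n, fun i => r * q i, A, ?_, fun i => mul_nonneg hr (hq i), hA, ?_⟩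
    · rw [hsim0]
      have := hsmul r _ ((hsim0 U).1 hU)
      simpa [smul_neg] using this
    · rw [hX, smul_add, Finset.smul_sum]
      congr 1
      exact Finset.sum_congr rfl (fun i _ => (smul_smul r (q i) (A i)))
  -- the equivalence part matches sim
  have gn_equiv : ∀ X : T, genNonneg sim X → genNonneg sim (-X) → sim 0 X := by
    rintro X ⟨U1, n1, q1, A1, hU1, hq1, hA1, hX⟩ ⟨U2, n2, q2, A2, hU2, hq2, hA2, hX'⟩
    -- sum of the two combos is -(U1+U2) ∼ 0
    have hsum : sim 0 ((∑ i, q1 i • A1 i) + (∑ i, q2 i • A2 i)) := by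
      have h1 : (∑ i, q1 i • A1 i) + (∑ i, q2 i • A2 i) = -(U1 + U2) := by
        have : X + (-X) = (U1 + ∑ i, q1 i • A1 i) + (U2 + ∑ i, q2 i • A2 i) := by
          rw [← hX, ← hX']
        have h0 : (0 : T) = (U1 + U2) + ((∑ i, q1 i • A1 i) + (∑ i, q2 i • A2 i)) := by
          rw [← add_neg_cancel X, this]; ring
        linear_combination -h0
      rw [h1]
      have := hadd _ _ ((hsim0 U1).1 hU1) ((hsim0 U2).1 hU2)
      simpa [neg_add, add_comm] using this
    -- combined as one big sum over Fin (n1+n2)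
    set q : Fin (n1 + n2) → ℝ := Fin.append q1 q2
    set A : Fin (n1 + n2) → T := Fin.append A1 A2
    have hq : ∀ i, 0 ≤ q i := by
      intro i
      refine Fin.addCases (fun j => ?_) (fun j => ?_) i
      · simp [q, Fin.append_left]; exact hq1 j
      · simp [q, Fin.append_right]; exact hq2 j
    have hA : ∀ i, A i * A i = A i := by
      intro i
      refine Fin.addCases (fun j => ?_) (fun j => ?_) i
      · simp [A, Fin.append_left]; exact hA1 j
      · simp [A, Fin.append_right]; exact hA2 j
    have hsum' : sim 0 (∑ i, q i • A i) := by
      rw [Fin.sum_univ_add]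
      simp only [q, A, Fin.append_left, Fin.append_right]
      exact hsum
    have hterms := key (n1 + n2) q A hq hA hsum'
    have hS1 : sim 0 (∑ i, q1 i • A1 i) := by
      apply sumsim
      intro i
      have := hterms (Fin.castAdd n2 i)
      simpa [q, A, Fin.append_left] using this
    have hU1' : sim 0 U1 := by
      have := hneg _ ((hsim0 U1).1 hU1); simpa using this
    rw [hX]; exact hadd _ _ hU1' hS1
  -- build P
  refine ⟨⟨fun X Y => genNonneg sim (Y - X), ?_, ?_, ?_, ?_⟩, rfl, ?_, ?_⟩
  · intro A hA; simpa using gn_plaus A hA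
  · intro X Y hX hY
    have := gn_add _ _ (by simpa using hX) (by simpa using hY)
    simpa using this
  · intro r X hr hX
    have := gn_smul r _ hr (by simpa using hX)
    simpa using this
  · intro X Y; simp
  · -- equivalence part ↔ sim
    intro X Y
    constructor
    · rintro ⟨h1, h2⟩
      simp only [PlausiblePreorder.equiv] at *
      rw [hext]
      apply gn_equiv
      · exact h1
      · simpa [neg_sub] using h2
    · intro h
      have h' : sim 0 (Y - X) := (hext X Y).1 h
      have h'' : sim 0 (X - Y) := by simpa [neg_sub] using hneg _ h'
      constructor
      · exact ⟨Y - X, 0, Fin.elim0, Fin.elim0, (hsim0 _).2 (by simpa [neg_sub] using h''),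
          fun i => i.elim0, fun i => i.elim0, by simp⟩
      · exact ⟨X - Y, 0, Fin.elim0, Fin.elim0, (hsim0 _).2 (by simpa [neg_sub] using h'),
          fun i => i.elim0, fun i => i.elim0, by simp⟩
  · -- minimality
    intro Q hQ X Y hle
    obtain ⟨U, n, q, A, hU, hq, hA, hXY⟩ := hle
    rw [Q.extension, hXY]
    have hQU : Q.le 0 U := ((hQ U 0).2 hU).2
    have hQ0 : Q.le 0 (0 : T) := ((hQ 0 0).2 hrefl).1
    have hQS : Q.le 0 (∑ i, q i • A i) := by
      refine Finset.sum_induction _ (fun x => Q.le 0 x)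
        (fun a b ha hb => Q.additive a b ha hb) hQ0 (fun i _ => ?_)
      exact Q.smul_nonneg (q i) (A i) (hq i) (Q.plausible (A i) (hA i))
    exact Q.additive _ _ hQU hQS
end

section
/- The strict part $\lnsim$ of a plausible preorder satisfies: if $A$ is an event with $\neg(0\lnsim A)$ and $0\lnsim X$, then $0\lnsim X+A$ and $0\lnsim X-A$. -/
variable {T : Type*} [CommRing T] [Algebra ℝ T]

theorem strict_part_plausible_property (P : PlausiblePreorder T)
    (A X : T) (hA : A * A = A) (hnA : ¬ P.lt 0 A) (hX : P.lt 0 X) :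
    P.lt 0 (X + A) ∧ P.lt 0 (X - A) := by
  obtain ⟨hX0, hXn⟩ := hX
  have h0A : P.le 0 A := P.plausible A hA
  have hA0 : P.le A 0 := by
    by_contra h
    exact hnA ⟨h0A, h⟩
  have hnegA : P.le 0 (-A) := by
    have := (P.extension A 0).mp hA0
    simpa using this
  have hnX : ¬ P.le 0 (-X) := by
    intro h
    apply hXn
    rw [P.extension]
    simpa using h
  constructor
  · refine ⟨by simpa using P.additive X A hX0 h0A, fun h => ?_⟩
    have h1 : P.le 0 (-(X + A)) := by simpa using (P.extension (X + A) 0).mp h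
    have := P.additive _ _ h1 h0A
    exact hnX (by simpa [neg_add] using this)
  · refine ⟨?_, fun h => ?_⟩
    · rw [P.extension]
      simpa [sub_eq_add_neg] using P.additive X (-A) hX0 hnegA
    · have h1 : P.le 0 (-(X - A)) := by simpa using (P.extension (X - A) 0).mp h
      have := P.additive _ _ h1 hnegA
      exact hnX (by simpa [neg_sub, sub_eq_add_neg, add_assoc] using this)
end

section
/- Every relation $\lnsim$ on $\mathcal{T}$ satisfying the fundamental properties of a plausible strict partial order is the strict part of some plausible preorder; in particular, defining $0\lesssim X$ iff either $0\lnsim X$ or $X=\sum_{i=1}^n r_i A_i$ for real $r_i$ and events $A_i$ with $\neg(0\lnsim A_i)$ for all $i$, yields the smallest plausible preorder whose strict part is $\lnsim$. -/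
variable {T : Type*} [CommRing T] [Algebra ℝ T]

/-- The candidate "nonnegative" predicate generated by a plausible strict partial order:
`0 ≲ X` iff either `0 ⋦ X`, or `X = ∑ rᵢ • Aᵢ` for reals `rᵢ` and events `Aᵢ`
with `¬(0 ⋦ Aᵢ)`. -/
def genNonnegStrict (slt : T → T → Prop) (X : T) : Prop :=
  slt 0 X ∨ ∃ (n : ℕ) (r : Fin n → ℝ) (A : Fin n → T),
    (∀ i, A i * A i = A i) ∧ (∀ i, ¬ slt 0 (A i)) ∧ X = ∑ i, r i • A i

section Aux
variable (slt : T → T → Prop)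
    (hplaus : ∀ A X : T, A * A = A → ¬ slt 0 A → slt 0 X →
      slt 0 (X + A) ∧ slt 0 (X - A))
    (hirrefl : ¬ slt 0 0)
    (hadd : ∀ X Y : T, slt 0 X → slt 0 Y → slt 0 (X + Y))
    (hsmul : ∀ (p : ℝ) (X : T), 0 < p → slt 0 X → slt 0 (p • X))

include hplaus hsmul in
lemma aux_addNull (A X : T) (r : ℝ) (hA : A * A = A) (hnA : ¬ slt 0 A)
    (hX : slt 0 X) : slt 0 (X + r • A) := by
  rcases lt_trichotomy r 0 with hr | hr | hr
  · have h1 : slt 0 ((-r)⁻¹ • X) := hsmul _ _ (inv_pos.mpr (by linarith)) hX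
    have h2 := (hplaus A _ hA hnA h1).2
    have h3 := hsmul (-r) _ (by linarith) h2
    rwa [smul_sub, smul_smul, mul_inv_cancel₀ (by linarith : (-r) ≠ 0),
      one_smul, neg_smul, sub_neg_eq_add] at h3
  · simpa [hr] using hX
  · have h1 : slt 0 (r⁻¹ • X) := hsmul _ _ (inv_pos.mpr hr) hX
    have h2 := (hplaus A _ hA hnA h1).1
    have h3 := hsmul r _ hr h2
    rwa [smul_add, smul_smul, mul_inv_cancel₀ (by linarith : r ≠ 0), one_smul] at h3

include hplaus hsmul in
lemma aux_addComb (n : ℕ) (r : Fin n → ℝ) (A : Fin n → T)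
    (hA : ∀ i, A i * A i = A i) (hnA : ∀ i, ¬ slt 0 (A i))
    (X : T) (hX : slt 0 X) (s : Finset (Fin n)) :
    slt 0 (X + ∑ i ∈ s, r i • A i) := by
  induction s using Finset.induction_on with
  | empty => simpa using hX
  | @insert a s hns ih =>
    rw [Finset.sum_insert hns]
    have := aux_addNull slt hplaus hsmul (A a) (X + ∑ i ∈ s, r i • A i) (r a)
      (hA a) (hnA a) ih
    convert this using 1
    abel
end Aux

theorem plausibleStrict_sufficiency (slt : T → T → Prop)
    (hplaus : ∀ A X : T, A * A = A → ¬ slt 0 A → slt 0 X →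
      slt 0 (X + A) ∧ slt 0 (X - A))
    (hirrefl : ¬ slt 0 0)
    (hadd : ∀ X Y : T, slt 0 X → slt 0 Y → slt 0 (X + Y))
    (hsmul : ∀ (p : ℝ) (X : T), 0 < p → slt 0 X → slt 0 (p • X))
    (hext : ∀ X Y : T, slt X Y ↔ slt 0 (Y - X)) :
    ∃ P : PlausiblePreorder T,
      (P.le = fun X Y => genNonnegStrict slt (Y - X)) ∧
      (∀ X Y : T, P.lt X Y ↔ slt X Y) ∧
      (∀ Q : PlausiblePreorder T, (∀ X Y : T, Q.lt X Y ↔ slt X Y) →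
        ∀ X Y : T, P.le X Y → Q.le X Y) := by
  classical
  -- key iff for strict part
  have hkey : ∀ Z : T, genNonnegStrict slt Z ∧ ¬ genNonnegStrict slt (-Z) ↔ slt 0 Z := by
    intro Z
    constructor
    · rintro ⟨hZ, hnZ⟩
      rcases hZ with h | ⟨n, r, A, hA, hnA, hEq⟩
      · exact h
      · exfalso
        exact hnZ (Or.inr ⟨n, fun i => -(r i), A, hA, hnA, by
          rw [hEq, ← Finset.sum_neg_distrib]
          simp [neg_smul]⟩)
    · intro hZ
      refine ⟨Or.inl hZ, ?_⟩
      rintro (h | ⟨n, r, A, hA, hnA, hEq⟩)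
      · exact hirrefl (by simpa using hadd Z (-Z) hZ h)
      · have := aux_addComb slt hplaus hsmul n r A hA hnA Z hZ Finset.univ
        rw [← hEq] at this
        exfalso
        exact hirrefl (by simpa using this)
  refine ⟨⟨fun X Y => genNonnegStrict slt (Y - X), ?_, ?_, ?_, ?_⟩, rfl, ?_, ?_⟩
  · -- plausible
    intro A hA
    rw [sub_zero]
    by_cases h : slt 0 A
    · exact Or.inl h
    · exact Or.inr ⟨1, fun _ => 1, fun _ => A, fun _ => hA, fun _ => h, by simp⟩
  · -- additive
    intro X Y hX hY
    rw [sub_zero] at *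
    rcases hX with hX | ⟨n, r, A, hA, hnA, hEq⟩
    · rcases hY with hY | ⟨m, s, B, hB, hnB, hEq'⟩
      · exact Or.inl (hadd _ _ hX hY)
      · refine Or.inl ?_
        rw [hEq']
        exact aux_addComb slt hplaus hsmul m s B hB hnB X hX Finset.univ
    · rcases hY with hY | ⟨m, s, B, hB, hnB, hEq'⟩
      · refine Or.inl ?_
        rw [hEq, add_comm]
        exact aux_addComb slt hplaus hsmul n r A hA hnA Y hY Finset.univ
      · refine Or.inr ⟨n + m, Fin.append r s, Fin.append A B, ?_, ?_, ?_⟩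
        · intro i
          refine Fin.addCases (fun j => ?_) (fun j => ?_) i
          · simpa [Fin.append_left] using hA j
          · simpa [Fin.append_right] using hB j
        · intro i
          refine Fin.addCases (fun j => ?_) (fun j => ?_) i
          · simpa [Fin.append_left] using hnA j
          · simpa [Fin.append_right] using hnB j
        · rw [hEq, hEq', Fin.sum_univ_add]
          simp [Fin.append_left, Fin.append_right]
  · -- smul_nonneg
    intro q X hq hX
    rw [sub_zero] at *
    rcases eq_or_lt_of_le hq with hq0 | hq0
    · exact Or.inr ⟨0, Fin.elim0, Fin.elim0, fun i => i.elim0, fun i => i.elim0,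
        by simp [← hq0]⟩
    · rcases hX with hX | ⟨n, r, A, hA, hnA, hEq⟩
      · exact Or.inl (hsmul q X hq0 hX)
      · exact Or.inr ⟨n, fun i => q * r i, A, hA, hnA, by
          rw [hEq, Finset.smul_sum]; simp [smul_smul]⟩
  · -- extension
    intro X Y
    simp
  · -- strict part
    intro X Y
    rw [hext X Y]
    have : X - Y = -(Y - X) := by ring
    unfold PlausiblePreorder.lt
    simp only [this]
    exact hkey (Y - X)
  · -- minimality
    intro Q hQ X Y h
    rw [Q.extension]
    simp only at h
    rcases h with h | ⟨n, r, A, hA, hnA, hEq⟩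
    · exact ((hQ 0 (Y - X)).mpr h).1
    · rw [hEq]
      have hzero : Q.le 0 0 := Q.plausible 0 (by ring)
      have hterm : ∀ i, Q.le 0 (r i • A i) := by
        intro i
        have hle : Q.le 0 (A i) := Q.plausible _ (hA i)
        have hge : Q.le (A i) 0 := by
          by_contra hc
          exact hnA i ((hQ 0 (A i)).mp ⟨hle, hc⟩)
        have hneg : Q.le 0 (-(A i)) := by
          rw [← zero_sub]
          exact (Q.extension _ _).mp hge
        rcases le_or_gt 0 (r i) with hr | hr
        · exact Q.smul_nonneg _ _ hr hle
        · have : r i • A i = (-(r i)) • (-(A i)) := by simp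
          rw [this]
          exact Q.smul_nonneg _ _ (by linarith) hneg
      have : ∀ s : Finset (Fin n), Q.le 0 (∑ i ∈ s, r i • A i) := by
        intro s
        induction s using Finset.induction_on with
        | empty => simpa using hzero
        | insert _ _ hns ih =>
          rw [Finset.sum_insert hns]
          exact Q.additive _ _ (hterm _) ih
      exact this Finset.univ
end

section
/- Existence and uniqueness of expectation: for a plausible preorder $\lesssim$ with strict part $\lnsim$ and a random quantity $X$, the expectation $E(X)$ exists if and only if, in the extended real line, $\sup\{r\in\mathbb{R} : r\lnsim X\} = \inf\{r\in\mathbb{R} : X\lnsim r\}$, and in that case $E(X)$ equals this common value. -/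
variable {T : Type*} [CommRing T] [Algebra ℝ T]

/-- `ExpIs P X e`: the expectation of `X` naturally induced by `P` is `e ∈ ℝ̄`. -/
def ExpIs (P : PlausiblePreorder T) (X : T) (e : EReal) : Prop :=
  (∃ x : ℝ, e = (x : EReal) ∧ ∀ ε : ℝ, 0 < ε →
      P.lt ((-ε) • (1 : T)) (X - x • (1 : T)) ∧ P.lt (X - x • (1 : T)) (ε • (1 : T))) ∨
  (e = ⊤ ∧ ∀ y : ℝ, P.lt (y • (1 : T)) X) ∨
  (e = ⊥ ∧ ∀ y : ℝ, P.lt X (y • (1 : T)))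

namespace PlausiblePreorder

lemma le_trans' (P : PlausiblePreorder T) {a b c : T} (h1 : P.le a b) (h2 : P.le b c) :
    P.le a c := by
  rw [P.extension] at h1 h2 ⊢
  have := P.additive _ _ h1 h2
  rwa [show b - a + (c - b) = c - a by abel] at this

lemma lt_congr (P : PlausiblePreorder T) {a b c d : T} (h : b - a = d - c) :
    (P.lt a b ↔ P.lt c d) := by
  have h' : a - b = c - d := by rw [← neg_sub b a, h, neg_sub]
  unfold PlausiblePreorder.lt
  rw [P.extension a b, P.extension b a, P.extension c d, P.extension d c, h, h']

lemma smul_one_le (P : PlausiblePreorder T) {r s : ℝ} (h : r ≤ s) :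
    P.le (r • (1 : T)) (s • (1 : T)) := by
  rw [P.extension, ← sub_smul]
  exact P.smul_nonneg _ _ (by linarith) (P.plausible 1 (one_mul 1))

lemma lt_of_le_of_lt' (P : PlausiblePreorder T) {a b c : T} (h1 : P.le a b) (h2 : P.lt b c) :
    P.lt a c :=
  ⟨P.le_trans' h1 h2.1, fun h => h2.2 (P.le_trans' h h1)⟩

lemma lt_of_lt_of_le' (P : PlausiblePreorder T) {a b c : T} (h1 : P.lt a b) (h2 : P.le b c) :
    P.lt a c :=
  ⟨P.le_trans' h1.1 h2, fun h => h1.2 (P.le_trans' h2 h)⟩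

lemma lt_asymm' (P : PlausiblePreorder T) {a b : T} (h1 : P.lt a b) (h2 : P.lt b a) : False :=
  h1.2 h2.1

end PlausiblePreorder

theorem expectation_existence_uniqueness (P : PlausiblePreorder T) (X : T) :
    ((∃ e : EReal, ExpIs P X e) ↔
      sSup ((fun r : ℝ => (r : EReal)) '' {r : ℝ | P.lt (r • (1 : T)) X}) =
      sInf ((fun r : ℝ => (r : EReal)) '' {r : ℝ | P.lt X (r • (1 : T))})) ∧
    (∀ e : EReal, ExpIs P X e →
      e = sSup ((fun r : ℝ => (r : EReal)) '' {r : ℝ | P.lt (r • (1 : T)) X}) ∧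
      e = sInf ((fun r : ℝ => (r : EReal)) '' {r : ℝ | P.lt X (r • (1 : T))})) := by
  let L : Set ℝ := {r : ℝ | P.lt (r • (1 : T)) X}
  let U : Set ℝ := {r : ℝ | P.lt X (r • (1 : T))}
  -- translation lemmas
  have htrans1 : ∀ x ε : ℝ, (P.lt ((-ε) • (1 : T)) (X - x • (1 : T)) ↔ (x - ε) ∈ L) := by
    intro x ε
    show _ ↔ P.lt ((x - ε) • (1 : T)) X
    apply P.lt_congr
    simp only [sub_smul, neg_smul]
    abel
  have htrans2 : ∀ x ε : ℝ, (P.lt (X - x • (1 : T)) (ε • (1 : T)) ↔ (x + ε) ∈ U) := by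
    intro x ε
    show _ ↔ P.lt X ((x + ε) • (1 : T))
    apply P.lt_congr
    simp only [add_smul]
    abel
  -- members of L are dominated by members of U
  have hLU : ∀ r ∈ L, ∀ s ∈ U, r < s := by
    intro r hr s hs
    by_contra h
    push_neg at h
    exact P.lt_asymm' hr (P.lt_of_lt_of_le' hs (P.smul_one_le h))
  -- the uniqueness claim
  have claim : ∀ e : EReal, ExpIs P X e →
      e = sSup ((fun r : ℝ => (r : EReal)) '' L) ∧
      e = sInf ((fun r : ℝ => (r : EReal)) '' U) := by
    rintro e (⟨x, rfl, hx⟩ | ⟨rfl, hx⟩ | ⟨rfl, hx⟩)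
    · have hub : ∀ r ∈ L, r ≤ x := by
        intro r hr
        by_contra h
        push_neg at h
        have := (htrans2 x (r - x)).mp (hx (r - x) (by linarith)).2
        rw [show x + (r - x) = r by ring] at this
        exact absurd (hLU r hr r this) (lt_irrefl r)
      have hlb : ∀ s ∈ U, x ≤ s := by
        intro s hs
        by_contra h
        push_neg at h
        have := (htrans1 x (x - s)).mp (hx (x - s) (by linarith)).1
        rw [show x - (x - s) = s by ring] at this
        exact absurd (hLU s this s hs) (lt_irrefl s)
      constructor
      · apply le_antisymm
        · -- x ≤ sSup
          by_contra h
          push_neg at h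
          obtain ⟨r, hr1, hr2⟩ := EReal.exists_between_coe_real h
          rw [EReal.coe_lt_coe_iff] at hr2
          have hmem : (x - (x - r)) ∈ L := (htrans1 x (x - r)).mp
            (hx (x - r) (by linarith)).1
          rw [show x - (x - r) = r by ring] at hmem
          exact absurd (le_sSup (Set.mem_image_of_mem _ hmem)) (not_le.mpr hr1)
        · apply sSup_le
          rintro _ ⟨r, hr, rfl⟩
          exact EReal.coe_le_coe_iff.mpr (hub r hr)
      · apply le_antisymm
        · apply le_sInf
          rintro _ ⟨s, hs, rfl⟩
          exact EReal.coe_le_coe_iff.mpr (hlb s hs)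
        · by_contra h
          push_neg at h
          obtain ⟨s, hs1, hs2⟩ := EReal.exists_between_coe_real h
          rw [EReal.coe_lt_coe_iff] at hs1
          have hmem : (x + (s - x)) ∈ U := (htrans2 x (s - x)).mp
            (hx (s - x) (by linarith)).2
          rw [show x + (s - x) = s by ring] at hmem
          exact absurd (sInf_le (Set.mem_image_of_mem _ hmem)) (not_le.mpr hs2)
    · -- e = ⊤ : L = ℝ, U = ∅
      have hU : U = ∅ := by
        ext s
        simp only [Set.mem_empty_iff_false, iff_false]
        intro hs
        exact P.lt_asymm' (hx s) hs
      constructor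
      · symm
        apply le_antisymm le_top
        by_contra h
        push_neg at h
        obtain ⟨r, hr1, hr2⟩ := EReal.exists_between_coe_real h
        exact absurd (le_sSup (Set.mem_image_of_mem (fun r : ℝ => (r : EReal)) (show r ∈ L from hx r))) (not_le.mpr hr1)
      · rw [hU]
        simp
    · -- e = ⊥ : U = ℝ, L = ∅
      have hL : L = ∅ := by
        ext r
        simp only [Set.mem_empty_iff_false, iff_false]
        intro hr
        exact P.lt_asymm' (hx r) hr
      constructor
      · rw [hL]; simp
      · apply le_antisymm bot_le
        by_contra h
        push_neg at h
        obtain ⟨s, hs1, hs2⟩ := EReal.exists_between_coe_real h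
        exact absurd (sInf_le (Set.mem_image_of_mem (fun r : ℝ => (r : EReal)) (show s ∈ U from hx s))) (not_le.mpr hs2)
  refine ⟨⟨fun ⟨e, he⟩ => ((claim e he).1.symm.trans (claim e he).2), fun heq => ?_⟩, claim⟩
  -- existence from sup = inf
  rcases eq_top_or_lt_top (sSup ((fun r : ℝ => (r : EReal)) '' L)) with htop | hlt
  · refine ⟨⊤, Or.inr (Or.inl ⟨rfl, fun y => ?_⟩)⟩
    have hy : (y : EReal) < sSup ((fun r : ℝ => (r : EReal)) '' L) := by
      rw [htop]; exact EReal.coe_lt_top y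
    obtain ⟨_, ⟨r, hr, rfl⟩, hyr⟩ := lt_sSup_iff.mp hy
    exact P.lt_of_le_of_lt' (P.smul_one_le (EReal.coe_le_coe_iff.mp hyr.le)) hr
  rcases eq_bot_or_bot_lt (sSup ((fun r : ℝ => (r : EReal)) '' L)) with hbot | hgt
  · refine ⟨⊥, Or.inr (Or.inr ⟨rfl, fun y => ?_⟩)⟩
    have hy : sInf ((fun r : ℝ => (r : EReal)) '' U) < (y : EReal) := by
      rw [← heq, hbot]; exact EReal.bot_lt_coe y
    obtain ⟨_, ⟨s, hs, rfl⟩, hsy⟩ := sInf_lt_iff.mp hy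
    exact P.lt_of_lt_of_le' hs (P.smul_one_le (EReal.coe_le_coe_iff.mp hsy.le))
  · obtain ⟨x, hxe⟩ : ∃ x : ℝ, sSup ((fun r : ℝ => (r : EReal)) '' L) = (x : EReal) :=
      ⟨(sSup ((fun r : ℝ => (r : EReal)) '' L)).toReal,
        (EReal.coe_toReal hlt.ne hgt.ne').symm⟩
    refine ⟨sSup ((fun r : ℝ => (r : EReal)) '' L), Or.inl ⟨x, hxe, fun ε hε => ?_⟩⟩
    constructor
    · rw [htrans1]
      have hy : ((x - ε : ℝ) : EReal) < sSup ((fun r : ℝ => (r : EReal)) '' L) := by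
        rw [hxe]; exact EReal.coe_lt_coe_iff.mpr (by linarith)
      obtain ⟨_, ⟨r, hr, rfl⟩, hyr⟩ := lt_sSup_iff.mp hy
      exact P.lt_of_le_of_lt' (P.smul_one_le (EReal.coe_le_coe_iff.mp hyr.le)) hr
    · rw [htrans2]
      have hy : sInf ((fun r : ℝ => (r : EReal)) '' U) < ((x + ε : ℝ) : EReal) := by
        rw [← heq, hxe]; exact EReal.coe_lt_coe_iff.mpr (by linarith)
      obtain ⟨_, ⟨s, hs, rfl⟩, hsy⟩ := sInf_lt_iff.mp hy
      exact P.lt_of_lt_of_le' hs (P.smul_one_le (EReal.coe_le_coe_iff.mp hsy.le))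
end

section
/- Preorder consistency: if $E(X)$ and $E(Y)$ both exist (in the extended reals) and $E(X) < E(Y)$, then $X \lnsim Y$; if both exist and $X \lesssim Y$, then $E(X) \leq E(Y)$. -/
variable {T : Type*} [CommRing T] [Algebra ℝ T]

lemma PP.le_congr (P : PlausiblePreorder T) {A B A' B' : T} (h : B - A = B' - A') :
    P.le A B ↔ P.le A' B' := by rw [P.extension A B, P.extension A' B', h]

lemma PP.lt_congr (P : PlausiblePreorder T) {A B A' B' : T} (h : B - A = B' - A') :
    P.lt A B ↔ P.lt A' B' := by
  have h2 : A - B = A' - B' := by linear_combination -h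
  unfold PlausiblePreorder.lt
  rw [PP.le_congr P h, PP.le_congr P h2]

lemma PP.le_trans (P : PlausiblePreorder T) {A B C : T}
    (h1 : P.le A B) (h2 : P.le B C) : P.le A C := by
  rw [P.extension] at h1 h2 ⊢
  have := P.additive _ _ h1 h2
  rwa [show (B - A) + (C - B) = C - A by ring] at this

lemma PP.lt_of_lt_of_le (P : PlausiblePreorder T) {A B C : T}
    (h1 : P.lt A B) (h2 : P.le B C) : P.lt A C :=
  ⟨PP.le_trans P h1.1 h2, fun h => h1.2 (PP.le_trans P h2 h)⟩

lemma PP.lt_of_le_of_lt (P : PlausiblePreorder T) {A B C : T}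
    (h1 : P.le A B) (h2 : P.lt B C) : P.lt A C :=
  ⟨PP.le_trans P h1 h2.1, fun h => h2.2 (PP.le_trans P h h1)⟩

lemma PP.lt_trans (P : PlausiblePreorder T) {A B C : T}
    (h1 : P.lt A B) (h2 : P.lt B C) : P.lt A C :=
  PP.lt_of_lt_of_le P h1 h2.1

/-- From the real case: `X ⋖ (x+ε)•1`. -/
lemma PP.lt_upper (P : PlausiblePreorder T) {X : T} {x ε : ℝ}
    (h : P.lt (X - x • (1 : T)) (ε • (1 : T))) : P.lt X ((x + ε) • (1 : T)) := by
  rwa [PP.lt_congr P (show (ε • (1:T)) - (X - x • (1:T)) = (x + ε) • (1:T) - X by module)] at h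

/-- From the real case: `(x-ε)•1 ⋖ X`. -/
lemma PP.lt_lower (P : PlausiblePreorder T) {X : T} {x ε : ℝ}
    (h : P.lt ((-ε) • (1 : T)) (X - x • (1 : T))) : P.lt ((x - ε) • (1 : T)) X := by
  rwa [PP.lt_congr P (show (X - x • (1:T)) - (-ε) • (1:T) = X - (x - ε) • (1:T) by module)] at h

lemma exp_lt (P : PlausiblePreorder T) (X Y : T) (ex ey : EReal)
    (hX : ExpIs P X ex) (hY : ExpIs P Y ey) (h : ex < ey) : P.lt X Y := by
  rcases hX with ⟨x, rfl, hx⟩ | ⟨rfl, hx⟩ | ⟨rfl, hx⟩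
  · rcases hY with ⟨y, rfl, hy⟩ | ⟨rfl, hy⟩ | ⟨rfl, hy⟩
    · have hxy : x < y := by exact_mod_cast h
      have hε : (0:ℝ) < (y - x) / 2 := by linarith
      have h1 := PP.lt_upper P (hx _ hε).2
      have h2 := PP.lt_lower P (hy _ hε).1
      have e1 : x + (y - x) / 2 = y - (y - x) / 2 := by ring
      rw [e1] at h1
      exact PP.lt_trans P h1 h2
    · exact PP.lt_trans P (PP.lt_upper P (hx 1 one_pos).2) (hy (x + 1))
    · exact absurd h (by simp)
  · exact absurd h (by simp)
  · rcases hY with ⟨y, rfl, hy⟩ | ⟨rfl, hy⟩ | ⟨rfl, hy⟩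
    · exact PP.lt_trans P (hx (y - 1)) (PP.lt_lower P (hy 1 one_pos).1)
    · exact PP.lt_trans P (hx 0) (hy 0)
    · exact absurd h (by simp)

theorem preorder_consistency (P : PlausiblePreorder T) (X Y : T) (ex ey : EReal)
    (hX : ExpIs P X ex) (hY : ExpIs P Y ey) :
    (ex < ey → P.lt X Y) ∧ (P.le X Y → ex ≤ ey) := by
  refine ⟨exp_lt P X Y ex ey hX hY, fun hle => ?_⟩
  by_contra hlt
  push_neg at hlt
  exact (exp_lt P Y X ey ex hY hX hlt).2 hle
end

section
/- Chain form of Bayes' rule (finite case): if $E(X|C\cdot D) = x$ and $P(C|D) = E(C|D) = c$ are both real numbers, then $E(X\cdot C|D)$ exists and equals $x\cdot c$. -/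
variable {T : Type*} [CommRing T] [Algebra ℝ T]

/-- The conditional expectation of `X` given event `C` is the real number `x`. -/
def CondExpReal (P : PlausiblePreorder T) (X C : T) (x : ℝ) : Prop :=
  ∀ ε : ℝ, 0 < ε →
    P.lt ((-ε) • C) (X * C - x • C) ∧ P.lt (X * C - x • C) (ε • C)

/-- The conditional expectation of `X` given event `C` is `+∞`. -/
def CondExpTop (P : PlausiblePreorder T) (X C : T) : Prop :=
  ∀ y : ℝ, P.lt (y • C) (X * C)

/-- The conditional expectation of `X` given event `C` is `-∞`. -/
def CondExpBot (P : PlausiblePreorder T) (X C : T) : Prop :=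
  ∀ y : ℝ, P.lt (X * C) (y • C)

theorem bayes_chain_form (P : PlausiblePreorder T) (X C D : T)
    (hC : C * C = C) (hD : D * D = D) (x c : ℝ)
    (hx : CondExpReal P X (C * D) x) (hc : CondExpReal P C D c) :
    CondExpReal P (X * C) D (x * c) := by
  have hCD : P.le 0 (C * D) := P.plausible _ (by linear_combination D*D*hC + C*hD)
  have hDCD : P.le 0 (D - C * D) :=
    P.plausible _ (by linear_combination (1 - 2*C + C*C)*hD + D*hC)
  have hDpos : P.le 0 D := P.plausible D hD
  intro ε hε
  rw [mul_assoc X C D]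
  have hxa : (0:ℝ) ≤ |x| := abs_nonneg x
  have h1x : (0:ℝ) < 1 + |x| := by positivity
  set δ : ℝ := ε / (2 * (1 + |x|)) with hδdef
  have hδpos : 0 < δ := by rw [hδdef]; positivity
  have hδsum : δ + |x| * δ = ε / 2 := by rw [hδdef]; field_simp
  have hδle : |x| * δ ≤ ε / 2 := by linarith
  obtain ⟨hx1, hx2⟩ := hx δ hδpos
  obtain ⟨hc1, hc2⟩ := hc δ hδpos
  obtain ⟨hx1', hx2'⟩ := hx (ε/2) (half_pos hε)
  have a1 : P.le 0 (X*(C*D) - x•(C*D) - (-δ)•(C*D)) := (P.extension _ _).mp hx1.1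
  have a2 : P.le 0 (δ•(C*D) - (X*(C*D) - x•(C*D))) := (P.extension _ _).mp hx2.1
  have b1 : P.le 0 (C*D - c•D - (-δ)•D) := (P.extension _ _).mp hc1.1
  have b2 : P.le 0 (δ•D - (C*D - c•D)) := (P.extension _ _).mp hc2.1
  have c1 : P.le 0 (δ•D - δ•(C*D)) := by
    have h := P.smul_nonneg δ (D - C*D) hδpos.le hDCD
    have heq : δ•(D - C*D) = δ•D - δ•(C*D) := by module
    rwa [heq] at h
  have chalf : P.le 0 ((ε/2)•D - (ε/2)•(C*D)) := by
    have h := P.smul_nonneg (ε/2) (D - C*D) (half_pos hε).le hDCD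
    have heq : (ε/2)•(D - C*D) = (ε/2)•D - (ε/2)•(C*D) := by module
    rwa [heq] at h
  have hxF1 : P.le 0 (x•(C*D - c•D) + (|x| * δ)•D) := by
    rcases le_or_gt 0 x with h0 | h0
    · have h := P.smul_nonneg x _ h0 b1
      have heq : x•(C*D - c•D - (-δ)•D) = x•(C*D - c•D) + (|x| * δ)•D := by
        rw [abs_of_nonneg h0]; module
      rwa [heq] at h
    · have h := P.smul_nonneg (-x) _ (by linarith) b2
      have heq : (-x)•(δ•D - (C*D - c•D)) = x•(C*D - c•D) + (|x| * δ)•D := by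
        rw [abs_of_neg h0]; module
      rwa [heq] at h
  have hxF2 : P.le 0 ((|x| * δ)•D - x•(C*D - c•D)) := by
    rcases le_or_gt 0 x with h0 | h0
    · have h := P.smul_nonneg x _ h0 b2
      have heq : x•(δ•D - (C*D - c•D)) = (|x| * δ)•D - x•(C*D - c•D) := by
        rw [abs_of_nonneg h0]; module
      rwa [heq] at h
    · have h := P.smul_nonneg (-x) _ (by linarith) b1
      have heq : (-x)•(C*D - c•D - (-δ)•D) = (|x| * δ)•D - x•(C*D - c•D) := by
        rw [abs_of_neg h0]; module
      rwa [heq] at h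
  have hεδD : P.le 0 ((ε - δ - |x| * δ)•D) := P.smul_nonneg _ _ (by linarith) hDpos
  have hhalfδD : P.le 0 ((ε/2 - |x| * δ)•D) := P.smul_nonneg _ _ (by linarith) hDpos
  constructor
  · constructor
    · rw [P.extension]
      have hsum := P.additive _ _ (P.additive _ _ hεδD c1) (P.additive _ _ a1 hxF1)
      have heq : (ε - δ - |x| * δ)•D + (δ•D - δ•(C*D)) +
          ((X*(C*D) - x•(C*D) - (-δ)•(C*D)) + (x•(C*D - c•D) + (|x| * δ)•D)) =
          X*(C*D) - (x*c)•D - (-ε)•D := by module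
      rwa [heq] at hsum
    · intro hcon
      apply hx1'.2
      rw [P.extension] at hcon ⊢
      have hsum := P.additive _ _ (P.additive _ _ hcon hxF1) (P.additive _ _ hhalfδD chalf)
      have heq : ((-ε)•D - (X*(C*D) - (x*c)•D)) + (x•(C*D - c•D) + (|x| * δ)•D) +
          ((ε/2 - |x| * δ)•D + ((ε/2)•D - (ε/2)•(C*D))) =
          (-(ε/2))•(C*D) - (X*(C*D) - x•(C*D)) := by module
      rwa [heq] at hsum
  · constructor
    · rw [P.extension]
      have hsum := P.additive _ _ (P.additive _ _ hεδD c1) (P.additive _ _ a2 hxF2)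
      have heq : (ε - δ - |x| * δ)•D + (δ•D - δ•(C*D)) +
          ((δ•(C*D) - (X*(C*D) - x•(C*D))) + ((|x| * δ)•D - x•(C*D - c•D))) =
          ε•D - (X*(C*D) - (x*c)•D) := by module
      rwa [heq] at hsum
    · intro hcon
      apply hx2'.2
      rw [P.extension] at hcon ⊢
      have hsum := P.additive _ _ (P.additive _ _ hcon hxF2) (P.additive _ _ hhalfδD chalf)
      have heq : (X*(C*D) - (x*c)•D - ε•D) + ((|x| * δ)•D - x•(C*D - c•D)) +
          ((ε/2 - |x| * δ)•D + ((ε/2)•D - (ε/2)•(C*D))) =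
          (X*(C*D) - x•(C*D)) - (ε/2)•(C*D) := by module
      rwa [heq] at hsum
end

section
/- Chain form of Bayes' rule, zero conditional expectation: if $E(X|C\cdot D) = 0$, then $E(X\cdot C|D) = 0$. -/
variable {T : Type*} [CommRing T] [Algebra ℝ T]

theorem bayes_chain_form_zero (P : PlausiblePreorder T) (X C D : T)
    (hC : C * C = C) (hD : D * D = D)
    (hx : CondExpReal P X (C * D) 0) :
    CondExpReal P (X * C) D 0 := by
  intro ε hε
  obtain ⟨⟨h1a, h1b⟩, ⟨h2a, h2b⟩⟩ := hx ε hε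
  have hidem : (D - C*D)*(D - C*D) = D - C*D := by linear_combination (1-C)*hD + D*D*hC
  have hE : P.le 0 (ε • (D - C*D)) := P.smul_nonneg ε _ hε.le (P.plausible _ hidem)
  rw [P.extension] at h1a h2a
  constructor
  · constructor
    · rw [P.extension]
      have := P.additive _ _ h1a hE
      have heq : (X * C * D - (0:ℝ) • D - (-ε) • D)
          = (X * (C * D) - (0:ℝ) • (C * D) - (-ε) • (C * D)) + ε • (D - C * D) := by
        simp only [Algebra.smul_def, map_zero, map_neg, zero_mul, mul_zero]; ring
      rw [heq]; exact this
    · intro h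
      rw [P.extension] at h
      apply h1b
      rw [P.extension]
      have := P.additive _ _ h hE
      have heq : ((-ε) • D - (X * C * D - (0:ℝ) • D)) + ε • (D - C * D)
          = (-ε) • (C * D) - (X * (C * D) - (0:ℝ) • (C * D)) := by
        simp only [Algebra.smul_def, map_zero, map_neg, zero_mul, mul_zero]; ring
      rw [heq] at this; exact this
  · constructor
    · rw [P.extension]
      have := P.additive _ _ h2a hE
      have heq : (ε • D - (X * C * D - (0:ℝ) • D))
          = (ε • (C * D) - (X * (C * D) - (0:ℝ) • (C * D))) + ε • (D - C * D) := by
        simp only [Algebra.smul_def, map_zero, map_neg, zero_mul, mul_zero]; ring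
      rw [heq]; exact this
    · intro h
      rw [P.extension] at h
      apply h2b
      rw [P.extension]
      have := P.additive _ _ h hE
      have heq : ((X * C * D - (0:ℝ) • D) - ε • D) + ε • (D - C * D)
          = (X * (C * D) - (0:ℝ) • (C * D)) - ε • (C * D) := by
        simp only [Algebra.smul_def, map_zero, map_neg, zero_mul, mul_zero]; ring
      rw [heq] at this; exact this
end

section
/- P form of Bayes' rule with infinite conditional expectation: if $E(X|C\cdot D) \in \{-\infty,+\infty\}$ and there is a real $p$ such that $-pD \lesssim X\cdot C\cdot D \lesssim pD$, then $P(C|D) = 0$. -/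
variable {T : Type*} [CommRing T] [Algebra ℝ T]

theorem bayes_P_form_infinite (P : PlausiblePreorder T) (X C D : T)
    (hC : C * C = C) (hD : D * D = D)
    (hinf : CondExpTop P X (C * D) ∨ CondExpBot P X (C * D))
    (hp : ∃ p : ℝ, P.le ((-p) • D) (X * C * D) ∧ P.le (X * C * D) (p • D)) :
    CondExpReal P C D 0 := by

  obtain ⟨p, hp1, hp2⟩ := hp
  have ext := P.extension
  have ltrans : ∀ {A B E : T}, P.le A B → P.le B E → P.le A E := by
    intro A B E h1 h2
    rw [ext] at h1 h2 ⊢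
    have := P.additive _ _ h1 h2
    rwa [show B - A + (E - B) = E - A by ring] at this
  have hDpos : P.le 0 D := P.plausible D hD
  have hCDpos : P.le 0 (C * D) := P.plausible _ (by
    rw [mul_mul_mul_comm, hC, hD])
  rw [mul_assoc] at hp1 hp2
  intro ε hε
  simp only [zero_smul, sub_zero]
  rcases hinf with htop | hbot
  · -- key : ∀ y, y • (C*D) < p • D
    have key : ∀ y : ℝ, P.lt (y • (C * D)) (p • D) := fun y =>
      ⟨ltrans (htop y).1 hp2, fun h => (htop y).2 (ltrans hp2 h)⟩
    set t : ℝ := max (p / ε) 0 + 1 with ht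
    have ht0 : 0 < t := by positivity
    have h1 : p / ε ≤ t := by
      have := le_max_left (p / ε) 0; rw [ht]; linarith
    have htp2 : p ≤ t * ε := by
      have h2 : p / ε * ε ≤ t * ε := by nlinarith
      rwa [div_mul_cancel₀ _ hε.ne'] at h2
    have htp : p / t ≤ ε := by rw [div_le_iff₀ ht0]; linarith
    constructor
    · constructor
      · rw [ext]
        have := P.additive _ _ hCDpos (P.smul_nonneg ε D hε.le hDpos)
        rwa [show C * D + ε • D = C * D - (-ε) • D by module] at this
      · intro h
        rw [ext] at h
        -- h : 0 ≤ (-ε)•D - C*D ; derive degenerate case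
        have hnegD : P.le 0 ((-ε) • D) := by
          have := P.additive _ _ h hCDpos
          rwa [show (-ε) • D - C * D + C * D = (-ε) • D by module] at this
        have hall : ∀ r : ℝ, P.le 0 (r • D) := by
          intro r
          rcases le_total 0 r with hr | hr
          · exact P.smul_nonneg r D hr hDpos
          · have := P.smul_nonneg (-r / ε) _ (div_nonneg (by linarith) hε.le) hnegD
            rwa [show (-r / ε) • ((-ε) • D) = r • D by
              rw [smul_smul]; congr 1; field_simp] at this
        refine (key 1).2 ?_
        rw [ext]
        have := P.additive _ _ hCDpos (hall (-p))
        rwa [show C * D + (-p) • D = (1 : ℝ) • (C * D) - p • D by module] at this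
    · constructor
      · rw [ext]
        have h1 := (key t).1
        rw [ext] at h1
        have h2 := P.smul_nonneg (1 / t) _ (by positivity) h1
        rw [show (1 / t) • (p • D - t • (C * D)) = (p / t) • D - C * D by
          rw [smul_sub, smul_smul, smul_smul]; congr 2 <;> field_simp <;> simp] at h2
        have h3 := P.additive _ _ h2 (P.smul_nonneg (ε - p / t) D (by linarith) hDpos)
        rwa [show (p / t) • D - C * D + (ε - p / t) • D = ε • D - C * D by module] at h3
      · intro h
        rw [ext] at h
        refine (key t).2 ?_
        rw [ext]
        have h2 := P.smul_nonneg t _ ht0.le h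
        have h3 := P.additive _ _ h2 (P.smul_nonneg (t * ε - p) D (by linarith) hDpos)
        rwa [show t • (C * D - ε • D) + (t * ε - p) • D = t • (C * D) - p • D by module] at h3
  · -- key : ∀ y, (-p) • D < y • (C*D)
    have key : ∀ y : ℝ, P.lt ((-p) • D) (y • (C * D)) := fun y =>
      ⟨ltrans hp1 (hbot y).1, fun h => (hbot y).2 (ltrans h hp1)⟩
    set t : ℝ := max (p / ε) 0 + 1 with ht
    have ht0 : 0 < t := by positivity
    have h1 : p / ε ≤ t := by
      have := le_max_left (p / ε) 0; rw [ht]; linarith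
    have htp2 : p ≤ t * ε := by
      have h2 : p / ε * ε ≤ t * ε := by nlinarith
      rwa [div_mul_cancel₀ _ hε.ne'] at h2
    have htp : p / t ≤ ε := by rw [div_le_iff₀ ht0]; linarith
    constructor
    · constructor
      · rw [ext]
        have := P.additive _ _ hCDpos (P.smul_nonneg ε D hε.le hDpos)
        rwa [show C * D + ε • D = C * D - (-ε) • D by module] at this
      · intro h
        rw [ext] at h
        have hnegD : P.le 0 ((-ε) • D) := by
          have := P.additive _ _ h hCDpos
          rwa [show (-ε) • D - C * D + C * D = (-ε) • D by module] at this
        have hall : ∀ r : ℝ, P.le 0 (r • D) := by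
          intro r
          rcases le_total 0 r with hr | hr
          · exact P.smul_nonneg r D hr hDpos
          · have := P.smul_nonneg (-r / ε) _ (div_nonneg (by linarith) hε.le) hnegD
            rwa [show (-r / ε) • ((-ε) • D) = r • D by
              rw [smul_smul]; congr 1; field_simp] at this
        have hnegCD : P.le 0 (-(C * D)) := by
          have := P.additive _ _ h (P.smul_nonneg ε D hε.le hDpos)
          rwa [show (-ε) • D - C * D + ε • D = -(C * D) by module] at this
        refine (key 1).2 ?_
        rw [ext]
        have := P.additive _ _ (hall (-p)) hnegCD
        rwa [show (-p) • D + -(C * D) = (-p) • D - (1 : ℝ) • (C * D) by module] at this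
    · constructor
      · rw [ext]
        have h1 := (key (-t)).1
        rw [ext] at h1
        have h2 := P.smul_nonneg (1 / t) _ (by positivity) h1
        rw [show (1 / t) • ((-t) • (C * D) - (-p) • D) = (p / t) • D - C * D by
          rw [smul_sub, smul_smul, smul_smul]
          rw [show 1 / t * -t = -1 by field_simp, show 1 / t * -p = -(p / t) by field_simp]
          module] at h2
        have h3 := P.additive _ _ h2 (P.smul_nonneg (ε - p / t) D (by linarith) hDpos)
        rwa [show (p / t) • D - C * D + (ε - p / t) • D = ε • D - C * D by module] at h3
      · intro h
        rw [ext] at h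
        refine (key (-t)).2 ?_
        rw [ext]
        have h2 := P.smul_nonneg t _ ht0.le h
        have h3 := P.additive _ _ h2 (P.smul_nonneg (t * ε - p) D (by linarith) hDpos)
        rwa [show t • (C * D - ε • D) + (t * ε - p) • D = (-p) • D - (-t) • (C * D) by module] at h3
end

section
/- Sum rule for Coxian plausible values: if $PV$ is a Coxian plausible value, $A,B \in \mathcal{F}$ with $A\cdot B = 0$, and $C \in \mathcal{F}_0$, then $PV(A+B|C) = PV(A|C) + PV(B|C)$. -/
/-- `IsCoxianPV F PV` : `PV` is a Coxian plausible value on the family `F` of events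
of the unital associative commutative real algebra `T`. -/
structure IsCoxianPV {T : Type*} [CommRing T] [Algebra ℝ T]
    (F : Set T) (PV : T → T → ℝ) : Prop where
  nonempty : F.Nonempty
  events : ∀ A ∈ F, A * A = A
  neg_mem : ∀ A ∈ F, 1 - A ∈ F
  conj_mem : ∀ A ∈ F, ∀ B ∈ F, A * B ∈ F
  nonneg : ∀ A ∈ F, ∀ C ∈ F, C ≠ 0 → 0 ≤ PV A C
  positivity : ∀ C ∈ F, C ≠ 0 → 0 < PV C C
  negation : ∀ A ∈ F, ∀ C ∈ F, C ≠ 0 → PV (1 - A) C = 1 - PV A C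
  bayes : ∀ A ∈ F, ∀ C ∈ F, ∀ D ∈ F, C * D ≠ 0 → PV (A * C) D = PV A (C * D) * PV C D

lemma coxian_one_mem {T : Type*} [CommRing T] [Algebra ℝ T]
    {F : Set T} {PV : T → T → ℝ} (h : IsCoxianPV F PV) : (1 : T) ∈ F := by
  obtain ⟨X, hX⟩ := h.nonempty
  have h0 : X * (1 - X) ∈ F := h.conj_mem X hX _ (h.neg_mem X hX)
  have : X * (1 - X) = 0 := by
    have := h.events X hX; ring_nf; linear_combination -this
  rw [this] at h0
  have := h.neg_mem 0 h0
  simpa using this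

lemma coxian_PV_one {T : Type*} [CommRing T] [Algebra ℝ T]
    {F : Set T} {PV : T → T → ℝ} (h : IsCoxianPV F PV)
    {C : T} (hC : C ∈ F) (hC0 : C ≠ 0) : PV 1 C = 1 := by
  have hCC : C * C = C := h.events C hC
  have hb := h.bayes 1 (coxian_one_mem h) C hC C hC (by rw [hCC]; exact hC0)
  rw [one_mul, hCC] at hb
  have hpos := h.positivity C hC hC0
  nlinarith [hb, hpos]

lemma coxian_PV_zero_of {T : Type*} [CommRing T] [Algebra ℝ T]
    {F : Set T} {PV : T → T → ℝ} (h : IsCoxianPV F PV)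
    {X C : T} (hX : X ∈ F) (hC : C ∈ F) (hC0 : C ≠ 0) (hXC : X * C = 0) :
    PV X C = 0 := by
  have hCC : C * C = C := h.events C hC
  have hb := h.bayes X hX C hC C hC (by rw [hCC]; exact hC0)
  rw [hXC, hCC] at hb
  have h0 : PV 0 C = 0 := by
    have := h.negation 1 (coxian_one_mem h) C hC hC0
    rw [coxian_PV_one h hC hC0] at this
    simpa using this
  have hpos := h.positivity C hC hC0
  have := h0 ▸ hb
  nlinarith

theorem coxian_sum_rule {T : Type*} [CommRing T] [Algebra ℝ T]
    (F : Set T) (PV : T → T → ℝ) (h : IsCoxianPV F PV)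
    (A B C : T) (hA : A ∈ F) (hB : B ∈ F) (hAB : A * B = 0)
    (hC : C ∈ F) (hC0 : C ≠ 0) :
    PV (A + B) C = PV A C + PV B C := by
  have hA' : (1 - A) ∈ F := h.neg_mem A hA
  have hB' : (1 - B) ∈ F := h.neg_mem B hB
  have hprod : (1 - A) * (1 - B) ∈ F := h.conj_mem _ hA' _ hB'
  have hsum : A + B = 1 - (1 - A) * (1 - B) := by linear_combination hAB
  have hABF : A + B ∈ F := hsum ▸ h.neg_mem _ hprod
  by_cases hBC : (1 - B) * C = 0
  · -- degenerate case: B*C = C, A*C = 0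
    have hAC : A * C = 0 := by
      have : A * ((1 - B) * C) = A * 0 := by rw [hBC]
      calc A * C = A * ((1 - B) * C) + (A * B) * C := by ring
        _ = 0 := by rw [hBC, hAB]; ring
    have hA0 : PV A C = 0 := coxian_PV_zero_of h hA hC hC0 hAC
    have hB1 : PV B C = 1 := by
      have := coxian_PV_zero_of h hB' hC hC0 hBC
      rw [h.negation B hB C hC hC0] at this; linarith
    have hS1 : PV (A + B) C = 1 := by
      have hc : (1 - (A + B)) * C = 0 := by
        calc (1 - (A + B)) * C = (1 - B) * C - A * C := by ring
          _ = 0 := by rw [hBC, hAC]; ring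
      have := coxian_PV_zero_of h (h.neg_mem _ hABF) hC hC0 hc
      rw [h.negation _ hABF C hC hC0] at this; linarith
    rw [hS1, hA0, hB1]; norm_num
  · have hBCmem : (1 - B) * C ∈ F := h.conj_mem _ hB' C hC
    -- PV(A|C) = PV(A|(1-B)C)·PV(1-B|C)
    have e1 : PV A C = PV A ((1 - B) * C) * PV (1 - B) C := by
      have hb := h.bayes A hA _ hB' C hC hBC
      have : A * (1 - B) = A := by linear_combination -hAB
      rwa [this] at hb
    have e2 : PV ((1 - A) * (1 - B)) C
        = PV (1 - A) ((1 - B) * C) * PV (1 - B) C := h.bayes _ hA' _ hB' C hC hBC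
    have e3 : PV (1 - A) ((1 - B) * C) = 1 - PV A ((1 - B) * C) :=
      h.negation A hA _ hBCmem hBC
    have e4 : PV (1 - B) C = 1 - PV B C := h.negation B hB C hC hC0
    have e5 : PV (A + B) C = 1 - PV ((1 - A) * (1 - B)) C := by
      rw [hsum, h.negation _ hprod C hC hC0]
    rw [e5, e2, e3]
    nlinarith [e1, e4]
end
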